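/- Assume unit costs. For every j ∈ {1,…,B} and every permutation σ of Fin n, C₀^j(σ⁰) ≤ C₀^j(σ); that is, among all permutations, a permutation listing the indices in nondecreasing order of p i minimizes the expected number of queries needed, on assignments of block M^j, until n − β_j + 1 false bits have been observed. -/

import Mathlib

open Finset

/-- Number of true bits of an assignment. -/
def N1 {n : ℕ} (a : Fin n → Bool) : ℕ :=
  (Finset.univ.filter (fun i => a i = true)).card

/-- Probability of an assignment. -/
noncomputable def pr {n : ℕ} (p : Fin n → ℝ) (a : Fin n → Bool) : ℝ :=
  ∏ i, if a i then p i else 1 - p i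

/-- Least `k` such that the first `k` entries of `l` contain at least `m`
indices selected by `sel`. -/
noncomputable def stopCount {n : ℕ} (sel : Fin n → Bool) (m : ℕ) (l : List (Fin n)) : ℕ :=
  sInf {k | m ≤ ((l.take k).filter sel).length}

/-- `C₁^j(σ)`: expected number of queries, over the block `{a | αj ≤ N₁(a) < βj}`,
until `αj` ones have been observed, querying in the order `σ(0), σ(1), …`. -/
noncomputable def C1 {n : ℕ} (p : Fin n → ℝ) (αj βj : ℕ) (σ : Equiv.Perm (Fin n)) : ℝ :=
  ∑ a ∈ Finset.univ.filter (fun a : Fin n → Bool => αj ≤ N1 a ∧ N1 a < βj),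
    (stopCount a αj (List.ofFn (fun t => σ t)) : ℝ) * pr p a

/-- `C₀^j(σ)`: expected number of queries, over the block `{a | αj ≤ N₁(a) < βj}`,
until `n − βj + 1` zeros have been observed, querying in the order `σ(0), σ(1), …`. -/
noncomputable def C0 {n : ℕ} (p : Fin n → ℝ) (αj βj : ℕ) (σ : Equiv.Perm (Fin n)) : ℝ :=
  ∑ a ∈ Finset.univ.filter (fun a : Fin n → Bool => αj ≤ N1 a ∧ N1 a < βj),
    (stopCount (fun i => !a i) (n + 1 - βj) (List.ofFn (fun t => σ t)) : ℝ) * pr p a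

/-! ### Auxiliary development -/

/-- count of selected positions among the first `k`. -/
def cnt (n k : ℕ) (sel : Fin n → Bool) : ℕ :=
  (Finset.univ.filter fun t : Fin n => t.val < k ∧ sel t = true).card

noncomputable def tau (n m : ℕ) (sel : Fin n → Bool) : ℕ :=
  sInf {k | m ≤ cnt n k sel}

lemma countP_finRange {m : ℕ} (q : Fin m → Bool) :
    (List.finRange m).countP q = (univ.filter (fun t => q t = true)).card := by
  rw [Fin.univ_def]
  simp [Finset.filter, Finset.card, List.countP_eq_length_filter, Multiset.filter_coe]

lemma countP_ofFn {m : ℕ} {α : Type*} (g : Fin m → α) (sel : α → Bool) :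
    (List.ofFn g).countP sel = (univ.filter (fun t => sel (g t) = true)).card := by
  rw [List.ofFn_eq_map, List.countP_map, countP_finRange]; rfl

lemma bridge {n : ℕ} (f : Fin n → Fin n) (sel : Fin n → Bool) (k : ℕ) :
    (((List.ofFn f).take k).filter sel).length
      = cnt n k (fun t => sel (f t)) := by
  rcases le_or_gt k n with hk | hk
  · rw [← Fin.ofFn_take_eq_take_ofFn hk, ← List.countP_eq_length_filter, countP_ofFn]
    apply Finset.card_bij (fun (t : Fin k) _ => Fin.castLE hk t)
    · intro t ht
      simp only [mem_filter, mem_univ, true_and] at ht ⊢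
      exact ⟨t.isLt, by simpa [Fin.take] using ht⟩
    · intro t _ t' _ h
      exact Fin.castLE_injective hk h
    · intro t ht
      simp only [mem_filter, mem_univ, true_and] at ht
      exact ⟨⟨t.val, ht.1⟩, by simp only [mem_filter, mem_univ, true_and]; exact ht.2, by simp⟩
  · rw [List.take_of_length_le (by simp; omega), ← List.countP_eq_length_filter, countP_ofFn]
    congr 1
    apply Finset.filter_congr
    intro t _
    simp [lt_trans t.isLt hk]

lemma stopCount_eq {n : ℕ} (sel : Fin n → Bool) (m : ℕ) (f : Fin n → Fin n) :
    stopCount sel m (List.ofFn f) = tau n m (fun t => sel (f t)) := by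
  unfold stopCount tau
  congr 1
  ext k
  simp only [Set.mem_setOf_eq, bridge]

lemma N1_le {n : ℕ} (a : Fin n → Bool) : N1 a ≤ n := by
  have := Finset.card_filter_le (univ : Finset (Fin n)) (fun i => a i = true)
  simpa [N1] using this

lemma N1_comp {n : ℕ} (a : Fin n → Bool) (s : Equiv.Perm (Fin n)) :
    N1 (fun i => a (s i)) = N1 a := by
  unfold N1
  apply Finset.card_bij (fun t _ => s t)
  · intro t ht; simpa using (Finset.mem_filter.mp ht).2
  · intro t _ t' _ h; exact s.injective h
  · intro t ht
    exact ⟨s.symm t, by simpa using (Finset.mem_filter.mp ht).2, by simp⟩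

lemma cnt_top {n : ℕ} (a : Fin n → Bool) :
    cnt n n (fun t => !a t) = n - N1 a := by
  unfold cnt N1
  have : (univ.filter fun t : Fin n => t.val < n ∧ (!a t) = true)
      = univ \ (univ.filter fun t => a t = true) := by
    ext t; simp [t.isLt]
  rw [this, Finset.card_sdiff_of_subset (Finset.filter_subset _ _), Finset.card_univ, Fintype.card_fin]

lemma tau_mono {n m : ℕ} (sel sel' : Fin n → Bool)
    (h : ∀ k, cnt n k sel' ≤ cnt n k sel) (hne : m ≤ cnt n n sel') :
    tau n m sel ≤ tau n m sel' := by
  have hS : {k | m ≤ cnt n k sel'}.Nonempty := ⟨n, hne⟩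
  have hmem := Nat.sInf_mem hS
  exact Nat.sInf_le (le_trans hmem (h _))

noncomputable def DD (n αj βj m : ℕ) (q : Fin n → ℝ) : ℝ :=
  ∑ b ∈ Finset.univ.filter (fun b : Fin n → Bool => αj ≤ N1 b ∧ N1 b < βj),
    (tau n m (fun t => !b t) : ℝ) * pr q b

lemma pr_comp {n : ℕ} (q : Fin n → ℝ) (b : Fin n → Bool) (s : Equiv.Perm (Fin n)) :
    pr (fun i => q (s i)) b = pr q (fun i => b (s.symm i)) := by
  unfold pr
  rw [← Equiv.prod_comp s (fun i => if b (s.symm i) then q i else 1 - q i)]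
  simp

lemma C0_eq_DD {n : ℕ} (p : Fin n → ℝ) (αj βj : ℕ) (σ : Equiv.Perm (Fin n)) :
    C0 p αj βj σ = DD n αj βj (n + 1 - βj) (fun i => p (σ i)) := by
  unfold C0 DD
  rw [Finset.sum_congr rfl (fun a _ => by rw [stopCount_eq (fun i => !a i) (n + 1 - βj) σ])]
  apply Finset.sum_nbij' (i := fun a => fun t => a (σ t)) (j := fun b => fun i => b (σ.symm i))
  · intro a ha
    simp only [mem_filter, mem_univ, true_and] at ha ⊢
    rwa [N1_comp]
  · intro b hb
    simp only [mem_filter, mem_univ, true_and] at hb ⊢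
    rwa [N1_comp _ σ.symm]
  · intro a _; funext i; simp
  · intro b _; funext i; simp
  · intro a _
    rw [pr_comp]
    have : (fun i => a (σ (σ.symm i))) = a := by funext i; simp
    rw [this]


lemma cnt_swap_le {n : ℕ} (c : Fin n → Bool) (x y : Fin n) (hxy : x.val + 1 = y.val)
    (hcx : c x = true) (hcy : c y = false) (k : ℕ) :
    cnt n k (fun t => !c t) ≤ cnt n k (fun t => !c (Equiv.swap x y t)) := by
  classical
  apply Finset.card_le_card_of_injOn (fun t => if t = y then x else t)
  · intro t ht
    simp only [mem_coe, mem_filter, mem_univ, true_and] at ht ⊢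
    by_cases h : t = y
    · subst h
      rw [if_pos rfl, Equiv.swap_apply_left, hcy]
      exact ⟨by omega, rfl⟩
    · have htx : t ≠ x := by
        intro hh; subst hh; rw [hcx] at ht; simp at ht
      rw [if_neg h, Equiv.swap_apply_of_ne_of_ne htx h]
      exact ht
  · intro a ha b hb hab
    simp only [coe_filter, Set.mem_setOf_eq, mem_univ, true_and] at ha hb
    simp only at hab
    by_cases h1 : a = y <;> by_cases h2 : b = y
    · rw [h1, h2]
    · exfalso
      rw [if_pos h1, if_neg h2] at hab
      rw [← hab, hcx] at hb
      simp at hb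
    · exfalso
      rw [if_neg h1, if_pos h2] at hab
      rw [hab, hcx] at ha
      simp at ha
    · rwa [if_neg h1, if_neg h2] at hab

lemma pr_nonneg {n : ℕ} (q : Fin n → ℝ) (hq0 : ∀ i, 0 ≤ q i) (hq1 : ∀ i, q i ≤ 1)
    (c : Fin n → Bool) : 0 ≤ pr q c := by
  unfold pr
  apply Finset.prod_nonneg
  intro i _
  by_cases h : c i <;> simp [h] <;> [skip; linarith [hq1 i]]
  · exact hq0 i

lemma pr_swap_le {n : ℕ} (q : Fin n → ℝ) (hq0 : ∀ i, 0 ≤ q i) (hq1 : ∀ i, q i ≤ 1)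
    (c : Fin n → Bool) (x y : Fin n) (hne : x ≠ y) (hq : q y ≤ q x)
    (hcx : c x = true) (hcy : c y = false) :
    pr q (fun i => c (Equiv.swap x y i)) ≤ pr q c := by
  classical
  have hyx : y ≠ x := hne.symm
  have hymem : y ∈ univ.erase x := Finset.mem_erase.mpr ⟨hyx, mem_univ y⟩
  set R := ∏ i ∈ (univ.erase x).erase y, (if c i = true then q i else 1 - q i) with hRdef
  have hRpos : 0 ≤ R := by
    apply Finset.prod_nonneg
    intro i _
    by_cases h : c i <;> simp [h]
    · exact hq0 i
    · linarith [hq1 i]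
  have e2 : pr q c = q x * ((1 - q y) * R) := by
    unfold pr
    rw [← Finset.mul_prod_erase univ (fun i => if c i = true then q i else 1 - q i) (mem_univ x),
      ← Finset.mul_prod_erase _ _ hymem]
    rw [hcx, hcy]
    norm_num
    exact Or.inl (Or.inl hRdef.symm)
  have e1 : pr q (fun i => c (Equiv.swap x y i)) = (1 - q x) * (q y * R) := by
    unfold pr
    rw [← Finset.mul_prod_erase univ
        (fun i => if c (Equiv.swap x y i) = true then q i else 1 - q i) (mem_univ x),
      ← Finset.mul_prod_erase _ _ hymem]
    have hR : (∏ i ∈ (univ.erase x).erase y,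
        (if c (Equiv.swap x y i) = true then q i else 1 - q i)) = R := by
      rw [hRdef]
      apply Finset.prod_congr rfl
      intro i hi
      simp only [Finset.mem_erase] at hi
      rw [Equiv.swap_apply_of_ne_of_ne hi.2.1 hi.1]
    rw [hR, Equiv.swap_apply_left, Equiv.swap_apply_right, hcx, hcy]
    norm_num
  rw [e1, e2]
  nlinarith [mul_nonneg (sub_nonneg.mpr hq) hRpos, hq0 x, hq0 y, hq1 x, hq1 y]

/-- number of inversions -/
noncomputable def invCount {n : ℕ} (r : Fin n → ℝ) : ℕ :=
  (Finset.univ.filter (fun st : Fin n × Fin n => st.1 < st.2 ∧ r st.2 < r st.1)).card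

lemma DD_swap {n : ℕ} (αj βj m : ℕ) (hm : m = n + 1 - βj) (q : Fin n → ℝ)
    (hq0 : ∀ i, 0 ≤ q i) (hq1 : ∀ i, q i ≤ 1) (x y : Fin n)
    (hxy : x.val + 1 = y.val) (hq : q y ≤ q x) :
    DD n αj βj m (fun i => q (Equiv.swap x y i)) ≤ DD n αj βj m q := by
  classical
  set s := Equiv.swap x y with hs
  have hne : x ≠ y := by intro hh; rw [hh] at hxy; omega
  have hss : ∀ t, s (s t) = t := fun t => Equiv.swap_apply_self x y t
  have hsx : s x = y := Equiv.swap_apply_left x y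
  have hsy : s y = x := Equiv.swap_apply_right x y
  set M := Finset.univ.filter (fun c : Fin n → Bool => αj ≤ N1 c ∧ N1 c < βj) with hM
  -- Step 1 : rewrite the left-hand side
  have step1 : DD n αj βj m (fun i => q (s i))
      = ∑ c ∈ M, (tau n m (fun t => !c (s t)) : ℝ) * pr q c := by
    unfold DD
    rw [Finset.sum_congr rfl (fun b _ => by
      rw [pr_comp q b s, show s.symm = s from Equiv.symm_swap x y])]
    apply Finset.sum_nbij' (i := fun b => fun t => b (s t)) (j := fun c => fun t => c (s t))
    · intro b hb
      simp only [hM, mem_filter, mem_univ, true_and] at hb ⊢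
      rwa [N1_comp]
    · intro c hc
      simp only [hM, mem_filter, mem_univ, true_and] at hc ⊢
      rwa [N1_comp]
    · intro b _; funext t; simp [hss]
    · intro c _; funext t; simp [hss]
    · intro b _
      have h1 : (fun t => !(b (s (s t)))) = (fun t => !b t) := by
        funext t; rw [hss]
      simp only [h1]
  have step0 : DD n αj βj m q = ∑ c ∈ M, (tau n m (fun t => !c t) : ℝ) * pr q c := rfl
  rw [step1, step0, ← sub_nonneg, ← Finset.sum_sub_distrib]
  set F : (Fin n → Bool) → ℝ := fun c =>
    (tau n m (fun t => !c t) : ℝ) * pr q c - (tau n m (fun t => !c (s t)) : ℝ) * pr q c with hF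
  show 0 ≤ ∑ c ∈ M, F c
  rw [← Finset.sum_filter_add_sum_filter_not M (fun c => c x = c y)]
  have h0 : ∑ c ∈ M.filter (fun c => c x = c y), F c = 0 := by
    apply Finset.sum_eq_zero
    intro c hc
    simp only [hM, Finset.mem_filter] at hc
    have : (fun t => !c (s t)) = (fun t => !c t) := by
      funext t
      rcases eq_or_ne t x with rfl | htx
      · rw [hsx, ← hc.2]
      · rcases eq_or_ne t y with rfl | hty
        · rw [hsy, hc.2]
        · rw [hs, Equiv.swap_apply_of_ne_of_ne htx hty]
    rw [hF]
    simp only [this, sub_self]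
  rw [h0, zero_add]
  rw [← Finset.sum_filter_add_sum_filter_not (M.filter (fun c => ¬(c x = c y)))
    (fun c => c x = true)]
  set T1 := (M.filter (fun c => ¬(c x = c y))).filter (fun c => c x = true) with hT1
  set T2 := (M.filter (fun c => ¬(c x = c y))).filter (fun c => ¬(c x = true)) with hT2
  have hT1pt : ∀ c ∈ T1, c x = true ∧ c y = false ∧ (αj ≤ N1 c ∧ N1 c < βj) := by
    intro c hc
    rw [hT1] at hc
    simp only [hM, Finset.mem_filter, mem_univ, true_and] at hc
    refine ⟨hc.2, ?_, hc.1.1⟩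
    cases hcy : c y
    · rfl
    · exfalso; exact hc.1.2 (hc.2.trans hcy.symm)
  -- T2 is the image of T1 under composition with the swap
  have hsum2 : ∑ c ∈ T2, F c = ∑ c ∈ T1, F (fun t => c (s t)) := by
    apply Finset.sum_nbij' (i := fun c => fun t => c (s t)) (j := fun c => fun t => c (s t))
    · intro c hc
      rw [hT2] at hc
      simp only [hM, Finset.mem_filter, mem_univ, true_and] at hc
      rw [hT1]
      simp only [hM, Finset.mem_filter, mem_univ, true_and]
      have hcx : c x = false := by
        cases hcx : c x
        · rfl
        · exact absurd hcx hc.2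
      have hcy : c y = true := by
        cases hcy : c y
        · exfalso; apply hc.1.2; rw [hcx, hcy]
        · rfl
      refine ⟨⟨?_, ?_⟩, ?_⟩
      · rw [N1_comp]; exact hc.1.1
      · rw [hsx, hsy, hcx, hcy]; simp
      · rw [hsx, hcy]
    · intro c hc
      rw [hT1] at hc
      simp only [hM, Finset.mem_filter, mem_univ, true_and] at hc
      rw [hT2]
      simp only [hM, Finset.mem_filter, mem_univ, true_and]
      have hcy : c y = false := by
        cases hcy : c y
        · rfl
        · exfalso; exact hc.1.2 (hc.2.trans hcy.symm)
      refine ⟨⟨?_, ?_⟩, ?_⟩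
      · rw [N1_comp]; exact hc.1.1
      · rw [hsx, hsy, hcy, hc.2]; simp
      · rw [hsx, hcy]; simp
    · intro c _; funext t; simp only []; rw [hss]
    · intro c _; funext t; simp only []; rw [hss]
    · intro c hc
      have he : (fun t => (fun t' => c (s t')) (s t)) = c := by
        funext t; simp only []; rw [hss]
      rw [he]
  rw [hsum2, ← Finset.sum_add_distrib]
  apply Finset.sum_nonneg
  intro c hc
  obtain ⟨hcx, hcy, hblock⟩ := hT1pt c hc
  have htaus : (fun t => !(c (s (s t)))) = (fun t => !c t) := by
    funext t; rw [hss]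
  have hprs : pr q (fun t => c (s t)) ≤ pr q c := pr_swap_le q hq0 hq1 c x y hne hq hcx hcy
  have htau : tau n m (fun t => !c (s t)) ≤ tau n m (fun t => !c t) := by
    apply tau_mono
    · intro k; exact cnt_swap_le c x y hxy hcx hcy k
    · rw [cnt_top]
      have := N1_le c
      omega
  have hpr0 : 0 ≤ pr q c := pr_nonneg q hq0 hq1 c
  have hpr0' : 0 ≤ pr q (fun t => c (s t)) := pr_nonneg q hq0 hq1 _
  rw [hF]
  simp only [htaus]
  have expand : (tau n m (fun t => !c t) : ℝ) * pr q c
        - (tau n m (fun t => !c (s t)) : ℝ) * pr q c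
      + ((tau n m (fun t => !(c (s t))) : ℝ) * pr q (fun t => c (s t))
        - (tau n m (fun t => !c t) : ℝ) * pr q (fun t => c (s t)))
      = ((tau n m (fun t => !c t) : ℝ) - (tau n m (fun t => !c (s t)) : ℝ))
        * (pr q c - pr q (fun t => c (s t))) := by
    ring
  rw [expand]
  apply mul_nonneg
  · rw [sub_nonneg]
    exact_mod_cast htau
  · rw [sub_nonneg]
    exact hprs

lemma invCount_swap {n : ℕ} (r : Fin n → ℝ) (x y : Fin n)
    (hxy : x.val + 1 = y.val) (h : r y < r x) :
    invCount (fun i => r (Equiv.swap x y i)) < invCount r := by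
  classical
  set s := Equiv.swap x y with hs
  have hne : x ≠ y := by intro hh; rw [hh] at hxy; omega
  have hsx : s x = y := Equiv.swap_apply_left x y
  have hsy : s y = x := Equiv.swap_apply_right x y
  have sval : ∀ t : Fin n, (s t).val =
      if t.val = x.val then y.val else if t.val = y.val then x.val else t.val := by
    intro t
    rcases eq_or_ne t x with rfl | htx
    · simp [hsx]
    · rcases eq_or_ne t y with rfl | hty
      · rw [hsy, if_neg (by omega), if_pos rfl]
      · rw [hs, Equiv.swap_apply_of_ne_of_ne htx hty,
          if_neg (Fin.val_ne_iff.mpr htx), if_neg (Fin.val_ne_iff.mpr hty)]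
  unfold invCount
  simp only []
  set S := univ.filter (fun st : Fin n × Fin n => st.1 < st.2 ∧ r st.2 < r st.1) with hS
  set S' := univ.filter (fun st : Fin n × Fin n => st.1 < st.2 ∧ r (s st.2) < r (s st.1)) with hS'
  have hmem : (x, y) ∈ S := by
    rw [hS]; simp only [mem_filter, mem_univ, true_and]
    exact ⟨by rw [Fin.lt_def]; omega, h⟩
  have hmaps : ∀ st ∈ S', (s st.1, s st.2) ∈ S.erase (x, y) := by
    rintro ⟨u, v⟩ hst
    rw [hS'] at hst
    simp only [mem_filter, mem_univ, true_and] at hst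
    obtain ⟨huv, hr⟩ := hst
    rw [Finset.mem_erase]
    constructor
    · intro heq
      rw [Prod.mk.injEq] at heq
      have hu : u = y := s.injective (heq.1.trans hsy.symm)
      have hv : v = x := s.injective (heq.2.trans hsx.symm)
      rw [hu, hv, Fin.lt_def] at huv
      omega
    · rw [hS]; simp only [mem_filter, mem_univ, true_and]
      refine ⟨?_, hr⟩
      rw [Fin.lt_def, sval u, sval v]
      rw [Fin.lt_def] at huv
      split_ifs with h1 h2 h3 h4 h5
      all_goals try omega
      all_goals {
        exfalso
        have hu : u = x := Fin.ext (by omega)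
        have hv : v = y := Fin.ext (by omega)
        rw [hu, hv, hsx, hsy] at hr
        linarith }
  have hinj : Set.InjOn (fun st : Fin n × Fin n => (s st.1, s st.2)) S' := by
    intro a _ b _ hab
    rw [Prod.mk.injEq] at hab
    exact Prod.ext (s.injective hab.1) (s.injective hab.2)
  calc S'.card ≤ ((S.erase (x, y))).card := Finset.card_le_card_of_injOn _ hmaps hinj
    _ < S.card := Finset.card_erase_lt_of_mem hmem


lemma exists_descent {n : ℕ} (r : Fin n → ℝ) (h : ¬ Monotone r) :
    ∃ x y : Fin n, x.val + 1 = y.val ∧ r y < r x := by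
  match n, r, h with
  | 0, r, h => exact absurd (Subsingleton.monotone r) h
  | (n+1), r, h =>
    by_contra hc
    push_neg at hc
    apply h
    rw [Fin.monotone_iff_le_succ]
    intro i
    by_contra hlt
    push_neg at hlt
    exact absurd hlt (by simpa using hc (Fin.castSucc i) i.succ (by simp))

theorem stmt1 {n : ℕ} (hn : 1 ≤ n) (p : Fin n → ℝ)
    (hp : ∀ i, 0 < p i ∧ p i < 1)
    (B : ℕ) (hB : 2 ≤ B) (α : ℕ → ℕ)
    (hα1 : α 1 = 0) (hαtop : α (B + 1) = n + 1)
    (hmono : ∀ j, 1 ≤ j → j ≤ B → α j < α (j + 1))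
    (j : ℕ) (hj1 : 1 ≤ j) (hjB : j ≤ B)
    (σ0 : Equiv.Perm (Fin n))
    (hσ0 : ∀ s t : Fin n, s ≤ t → p (σ0 s) ≤ p (σ0 t))
    (σ : Equiv.Perm (Fin n)) :
    C0 p (α j) (α (j + 1)) σ0 ≤ C0 p (α j) (α (j + 1)) σ := by
  set αj := α j
  set βj := α (j + 1)
  set m := n + 1 - βj with hm
  rw [C0_eq_DD, C0_eq_DD]
  have hmono0 : Monotone (fun i => p (σ0 i)) := fun s t h => hσ0 s t h
  -- strong induction on inversions
  suffices H : ∀ N (τ : Equiv.Perm (Fin n)), invCount (fun i => p (τ i)) ≤ N →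
      DD n αj βj m (fun i => p (σ0 i)) ≤ DD n αj βj m (fun i => p (τ i)) by
    exact H _ σ le_rfl
  intro N
  induction N with
  | zero =>
    intro τ hτ
    have hmonoτ : Monotone (fun i => p (τ i)) := by
      by_contra hc
      obtain ⟨x, y, hxy, hlt⟩ := exists_descent _ hc
      have : (x, y) ∈ (Finset.univ.filter
          (fun st : Fin n × Fin n => st.1 < st.2 ∧ (fun i => p (τ i)) st.2 < (fun i => p (τ i)) st.1)) := by
        simp only [Finset.mem_filter, Finset.mem_univ, true_and]
        exact ⟨by rw [Fin.lt_def]; omega, hlt⟩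
      have : 0 < invCount (fun i => p (τ i)) := Finset.card_pos.mpr ⟨_, this⟩
      omega
    have : (fun i => p (σ0 i)) = (fun i => p (τ i)) :=
      Tuple.unique_monotone (f := p) (σ := σ0) (τ := τ) hmono0 hmonoτ
    rw [this]
  | succ N ih =>
    intro τ hτ
    by_cases hmonoτ : Monotone (fun i => p (τ i))
    · have : (fun i => p (σ0 i)) = (fun i => p (τ i)) :=
        Tuple.unique_monotone (f := p) (σ := σ0) (τ := τ) hmono0 hmonoτ
      rw [this]
    · obtain ⟨x, y, hxy, hlt⟩ := exists_descent _ hmonoτ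
      set τ' : Equiv.Perm (Fin n) := τ * Equiv.swap x y with hτ'
      have hτ'eq : (fun i => p (τ' i)) = (fun i => (fun t => p (τ t)) (Equiv.swap x y i)) := rfl
      have hswap : DD n αj βj m (fun i => p (τ' i)) ≤ DD n αj βj m (fun i => p (τ i)) := by
        rw [hτ'eq]
        exact DD_swap αj βj m hm _ (fun i => (hp _).1.le) (fun i => (hp _).2.le) x y hxy hlt.le
      have hinv : invCount (fun i => p (τ' i)) < invCount (fun i => p (τ i)) := by
        rw [hτ'eq]
        exact invCount_swap (fun t => p (τ t)) x y hxy hlt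
      exact le_trans (ih τ' (by omega)) hswap
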